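/- On the region Ω = {x : r(x) > 0}, the null vector field k is smooth and its gradient satisfies k_{b,a} = ∂k_b/∂x^a = (1/r)(η_{ab} + v_a k_b + k_a v_b − (1 + r a·k) k_a k_b) for all a, b, where k_b = η_{bc}k^c and v_a = η_{ab}v^b. -/

import Mathlib

open scoped BigOperators

noncomputable section

/-- The Minkowski metric η = diag(−1,1,1,1) on ℝ⁴. -/
def eta (i j : Fin 4) : ℝ := if i = j then (if i = 0 then -1 else 1) else 0

/-- Minkowski inner product a·b = η_{ij} a^i b^j. -/
def mdot (a b : Fin 4 → ℝ) : ℝ := ∑ i, ∑ j, eta i j * a i * b j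

/-- Lowering an index with η : k_i = η_{ij} k^j. -/
def lo (a : Fin 4 → ℝ) (i : Fin 4) : ℝ := ∑ j, eta i j * a j

lemma mdot_expand (a b : Fin 4 → ℝ) :
    mdot a b = -(a 0 * b 0) + a 1 * b 1 + a 2 * b 2 + a 3 * b 3 := by
  simp [mdot, eta, Fin.sum_univ_four]

lemma lo_expand (a : Fin 4 → ℝ) (i : Fin 4) :
    lo a i = (if i = 0 then -1 else 1) * a i := by
  fin_cases i <;> simp [lo, eta, Fin.sum_univ_four]

lemma mdot_symm (a b : Fin 4 → ℝ) : mdot a b = mdot b a := by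
  simp [mdot_expand]; ring

lemma mdot_single (c : Fin 4 → ℝ) (i : Fin 4) : mdot c (Pi.single i 1) = lo c i := by
  fin_cases i <;> simp [mdot_expand, lo_expand, Pi.single_apply]

lemma mdot_single_left (c : Fin 4 → ℝ) (i : Fin 4) : mdot (Pi.single i 1) c = lo c i := by
  rw [mdot_symm, mdot_single]

lemma lo_single (i j : Fin 4) : lo (Pi.single i (1:ℝ)) j = eta i j := by
  fin_cases i <;> fin_cases j <;> simp [lo_expand, eta, Pi.single_apply]

lemma lo_zero (a : Fin 4 → ℝ) : lo a 0 = -a 0 := by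
  rw [lo_expand]; norm_num

lemma lo_one (a : Fin 4 → ℝ) : lo a 1 = a 1 := by
  rw [lo_expand]; norm_num [show (1:Fin 4) ≠ 0 by decide]

lemma lo_two (a : Fin 4 → ℝ) : lo a 2 = a 2 := by
  rw [lo_expand]; norm_num [show (2:Fin 4) ≠ 0 by decide]

lemma lo_three (a : Fin 4 → ℝ) : lo a 3 = a 3 := by
  rw [lo_expand]; norm_num [show (3:Fin 4) ≠ 0 by decide]

lemma mdot_eq_sum (c w : Fin 4 → ℝ) : mdot c w = ∑ j, lo c j * w j := by
  simp [Fin.sum_univ_four, lo_zero, lo_one, lo_two, lo_three, mdot_expand]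

lemma mdot_sub_right (a b c : Fin 4 → ℝ) : mdot a (b - c) = mdot a b - mdot a c := by
  simp only [mdot_expand, Pi.sub_apply]; ring

lemma mdot_add_right (a b c : Fin 4 → ℝ) : mdot a (b + c) = mdot a b + mdot a c := by
  simp only [mdot_expand, Pi.add_apply]; ring

lemma mdot_smul_right (t : ℝ) (a b : Fin 4 → ℝ) : mdot a (t • b) = t * mdot a b := by
  simp only [mdot_expand, Pi.smul_apply, smul_eq_mul]; ring

lemma mdot_smul_left (t : ℝ) (a b : Fin 4 → ℝ) : mdot (t • a) b = t * mdot a b := by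
  simp only [mdot_expand, Pi.smul_apply, smul_eq_mul]; ring

lemma mdot_zero_left (b : Fin 4 → ℝ) : mdot 0 b = 0 := by
  simp [mdot_expand]

lemma lo_add (a b : Fin 4 → ℝ) (i : Fin 4) : lo (a + b) i = lo a i + lo b i := by
  simp only [lo_expand, Pi.add_apply]; ring

lemma lo_smul (t : ℝ) (a : Fin 4 → ℝ) (i : Fin 4) : lo (t • a) i = t * lo a i := by
  simp only [lo_expand, Pi.smul_apply, smul_eq_mul]; ring

lemma lo_sub (a b : Fin 4 → ℝ) (i : Fin 4) : lo (a - b) i = lo a i - lo b i := by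
  simp only [lo_expand, Pi.sub_apply]; ring

/-- `mdot c ·` as a continuous linear map. -/
def mlin (c : Fin 4 → ℝ) : (Fin 4 → ℝ) →L[ℝ] ℝ :=
  ∑ j, lo c j • ContinuousLinearMap.proj j

@[simp] lemma mlin_apply (c w : Fin 4 → ℝ) : mlin c w = mdot c w := by
  have h : mlin c w = ∑ j, lo c j * w j := by
    simp [mlin]
  rw [h]; exact (mdot_eq_sum c w).symm

section
variable {P : Type*} [NormedAddCommGroup P] [NormedSpace ℝ P]

lemma hasFDerivAt_proj' {f : P → Fin 4 → ℝ} {f' : P →L[ℝ] (Fin 4 → ℝ)} {p : P}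
    (hf : HasFDerivAt f f' p) (i : Fin 4) :
    HasFDerivAt (fun y => f y i) ((ContinuousLinearMap.proj i).comp f') p :=
  (ContinuousLinearMap.proj (R := ℝ) (φ := fun _ : Fin 4 => ℝ) i).hasFDerivAt.comp p hf

lemma hasFDerivAt_mdot {f g : P → Fin 4 → ℝ} {f' g' : P →L[ℝ] (Fin 4 → ℝ)} {p : P}
    (hf : HasFDerivAt f f' p) (hg : HasFDerivAt g g' p) {D : P →L[ℝ] ℝ}
    (hD : ∀ w, D w = mdot (f p) (g' w) + mdot (f' w) (g p)) :
    HasFDerivAt (fun y => mdot (f y) (g y)) D p := by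
  have hfi := fun i => hasFDerivAt_proj' hf i
  have hgi := fun i => hasFDerivAt_proj' hg i
  have H := ((((hfi 0).mul (hgi 0)).neg.add ((hfi 1).mul (hgi 1))).add
      ((hfi 2).mul (hgi 2))).add ((hfi 3).mul (hgi 3))
  have heq : (fun y => mdot (f y) (g y)) =
      fun y => -(f y 0 * g y 0) + f y 1 * g y 1 + f y 2 * g y 2 + f y 3 * g y 3 := by
    funext y; exact mdot_expand _ _
  rw [heq]
  refine H.congr_fderiv ?_
  ext w
  simp [hD w, mdot_expand]
  ring

lemma contDiffAt_mdot {n : WithTop ℕ∞} {f g : P → Fin 4 → ℝ} {p : P}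
    (hf : ContDiffAt ℝ n f p) (hg : ContDiffAt ℝ n g p) :
    ContDiffAt ℝ n (fun y => mdot (f y) (g y)) p := by
  have hfi := fun i => (contDiffAt_pi.mp hf) i
  have hgi := fun i => (contDiffAt_pi.mp hg) i
  have heq : (fun y => mdot (f y) (g y)) =
      fun y => -(f y 0 * g y 0) + f y 1 * g y 1 + f y 2 * g y 2 + f y 3 * g y 3 := by
    funext y; exact mdot_expand _ _
  rw [heq]
  exact ((((hfi 0).mul (hgi 0)).neg.add ((hfi 1).mul (hgi 1))).add
      ((hfi 2).mul (hgi 2))).add ((hfi 3).mul (hgi 3))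

end

lemma one_le_inf : ((⊤ : ℕ∞) : WithTop ℕ∞) ≠ 0 := by
  simp

lemma z_hasDerivAt (z : ℝ → Fin 4 → ℝ) (hz : ContDiff ℝ (⊤ : ℕ∞) z)
    (v : ℝ → Fin 4 → ℝ) (hv : ∀ τ i, v τ i = deriv (fun t => z t i) τ) (τ : ℝ) :
    HasDerivAt z (v τ) τ := by
  rw [hasDerivAt_pi]
  intro i
  rw [hv]
  exact (((contDiff_pi.mp hz i).differentiable one_le_inf) τ).hasDerivAt

lemma v_contDiff (z : ℝ → Fin 4 → ℝ) (hz : ContDiff ℝ (⊤ : ℕ∞) z)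
    (v : ℝ → Fin 4 → ℝ) (hv : ∀ τ i, v τ i = deriv (fun t => z t i) τ) :
    ContDiff ℝ (⊤ : ℕ∞) v := by
  rw [contDiff_pi]
  intro i
  have : (fun τ => v τ i) = deriv (fun t => z t i) := by funext τ; exact hv τ i
  rw [this]
  exact (contDiff_infty_iff_deriv.mp (contDiff_pi.mp hz i)).2

lemma chi0_pos (v₀ χ : Fin 4 → ℝ) (hnull : mdot χ χ = 0) (h0 : 0 ≤ χ 0)
    (hrpos : 0 < -mdot v₀ χ) : 0 < χ 0 := by
  rcases h0.lt_or_eq with h | h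
  · exact h
  · exfalso
    rw [mdot_expand] at hnull
    rw [← h] at hnull
    have h1 : χ 1 = 0 := by nlinarith [sq_nonneg (χ 1), sq_nonneg (χ 2), sq_nonneg (χ 3)]
    have h2 : χ 2 = 0 := by nlinarith [sq_nonneg (χ 1), sq_nonneg (χ 2), sq_nonneg (χ 3)]
    have h3 : χ 3 = 0 := by nlinarith [sq_nonneg (χ 1), sq_nonneg (χ 2), sq_nonneg (χ 3)]
    rw [mdot_expand, ← h, h1, h2, h3] at hrpos
    simp at hrpos

lemma u_contDiffAt
    (z : ℝ → Fin 4 → ℝ) (hz : ContDiff ℝ (⊤ : ℕ∞) z)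
    (v : ℝ → Fin 4 → ℝ) (hv : ∀ τ i, v τ i = deriv (fun t => z t i) τ)
    (u : (Fin 4 → ℝ) → ℝ)
    (hu : ∀ x, mdot (x - z (u x)) (x - z (u x)) = 0 ∧ z (u x) 0 ≤ x 0)
    (huniq : ∀ x τ, mdot (x - z τ) (x - z τ) = 0 → z τ 0 ≤ x 0 → τ = u x)
    (r : (Fin 4 → ℝ) → ℝ) (hr : ∀ x, r x = -mdot (v (u x)) (x - z (u x)))
    (x₀ : Fin 4 → ℝ) (hx₀ : 0 < r x₀) :
    ContDiffAt ℝ (⊤ : ℕ∞) u x₀ := by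
  classical
  set τ₀ := u x₀ with hτ₀
  set χ₀ : Fin 4 → ℝ := x₀ - z τ₀ with hχ₀
  have hne : r x₀ ≠ 0 := ne_of_gt hx₀
  set p₀ : (Fin 4 → ℝ) × ℝ := (x₀, τ₀) with hp₀
  set F : (Fin 4 → ℝ) × ℝ → ℝ := fun p => mdot (p.1 - z p.2) (p.1 - z p.2) with hF
  set Φ : (Fin 4 → ℝ) × ℝ → (Fin 4 → ℝ) × ℝ := fun p => (p.1, F p) with hΦdef
  -- derivative of χ̃
  set Efst := ContinuousLinearMap.fst ℝ (Fin 4 → ℝ) ℝ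
  set Esnd := ContinuousLinearMap.snd ℝ (Fin 4 → ℝ) ℝ
  have hzF : HasFDerivAt z ((1 : ℝ →L[ℝ] ℝ).smulRight (v τ₀)) τ₀ :=
    (z_hasDerivAt z hz v hv τ₀).hasFDerivAt
  set A : ((Fin 4 → ℝ) × ℝ) →L[ℝ] (Fin 4 → ℝ) :=
    Efst - ((1 : ℝ →L[ℝ] ℝ).smulRight (v τ₀)).comp Esnd with hA
  have hchi : HasFDerivAt (fun p : (Fin 4 → ℝ) × ℝ => p.1 - z p.2) A p₀ :=
    hasFDerivAt_fst.sub (hzF.comp p₀ hasFDerivAt_snd)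
  have hAw : ∀ w : (Fin 4 → ℝ) × ℝ, A w = w.1 - w.2 • v τ₀ := by
    intro w
    simp [hA, Efst, Esnd]
  -- derivative of F
  set c : ℝ := 2 * r x₀ with hc
  set D : ((Fin 4 → ℝ) × ℝ) →L[ℝ] ℝ :=
    (2 : ℝ) • ((mlin χ₀).comp Efst) + c • Esnd with hD
  have hχv : mdot χ₀ (v τ₀) = -r x₀ := by
    rw [mdot_symm]
    have := hr x₀
    rw [hχ₀, hτ₀]; linarith
  have hDw : ∀ w, D w = mdot ((fun p : (Fin 4 → ℝ) × ℝ => p.1 - z p.2) p₀) (A w)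
      + mdot (A w) ((fun p : (Fin 4 → ℝ) × ℝ => p.1 - z p.2) p₀) := by
    intro w
    have h1 : (fun p : (Fin 4 → ℝ) × ℝ => p.1 - z p.2) p₀ = χ₀ := rfl
    rw [h1, hAw w, mdot_symm (w.1 - w.2 • v τ₀) χ₀]
    simp [hD, Efst, Esnd, mdot_sub_right, mdot_smul_right, hχv, hc]
    ring
  have hFD : HasFDerivAt F D p₀ := hasFDerivAt_mdot hchi hchi hDw
  have hΦD : HasFDerivAt Φ (Efst.prod D) p₀ := HasFDerivAt.prodMk hasFDerivAt_fst hFD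
  -- the continuous linear equivalence
  set f₂ : ((Fin 4 → ℝ) × ℝ) →L[ℝ] ((Fin 4 → ℝ) × ℝ) :=
    Efst.prod (c⁻¹ • (Esnd - (2 : ℝ) • ((mlin χ₀).comp Efst))) with hf₂
  have hcne : c ≠ 0 := by simp [hc]; exact hne
  have hleft : Function.LeftInverse f₂ (Efst.prod D) := by
    intro p
    apply Prod.ext
    · simp [hf₂, Efst]
    · simp [hf₂, hD, Efst, Esnd]
      field_simp
  have hright : Function.RightInverse f₂ (Efst.prod D) := by
    intro p
    apply Prod.ext
    · simp [hf₂, Efst]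
    · simp [hf₂, hD, Efst, Esnd]
      field_simp
      ring
  set e : ((Fin 4 → ℝ) × ℝ) ≃L[ℝ] ((Fin 4 → ℝ) × ℝ) :=
    ContinuousLinearEquiv.equivOfInverse (Efst.prod D) f₂ hleft hright with he
  have hecoe : (e : ((Fin 4 → ℝ) × ℝ) →L[ℝ] ((Fin 4 → ℝ) × ℝ)) = Efst.prod D := rfl
  have hΦ'e : HasFDerivAt Φ (e : ((Fin 4 → ℝ) × ℝ) →L[ℝ] ((Fin 4 → ℝ) × ℝ)) p₀ := by
    rw [hecoe]; exact hΦD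
  -- smoothness of Φ
  have hχcd : ContDiffAt ℝ ((⊤:ℕ∞)) (fun p : (Fin 4 → ℝ) × ℝ => p.1 - z p.2) p₀ :=
    (contDiff_fst.sub (hz.comp contDiff_snd)).contDiffAt
  have hΦsm : ContDiffAt ℝ ((⊤:ℕ∞)) Φ p₀ :=
    ContDiffAt.prodMk contDiffAt_fst (contDiffAt_mdot hχcd hχcd)
  -- local inverse
  set ginv := hΦsm.localInverse hΦ'e one_le_inf with hginv
  have hΦp₀ : Φ p₀ = (x₀, 0) := by
    have : F p₀ = 0 := (hu x₀).1
    simp [hΦdef, this, hp₀]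
    exact this
  have hlocinv_cd : ContDiffAt ℝ ((⊤:ℕ∞)) ginv (x₀, 0) := by
    have := hΦsm.to_localInverse hΦ'e one_le_inf
    rwa [hΦp₀] at this
  set g : (Fin 4 → ℝ) → ℝ := fun y => (ginv (y, 0)).2 with hg
  have hpaircd : ContDiffAt ℝ ((⊤:ℕ∞)) (fun y : Fin 4 → ℝ => (y, (0:ℝ))) x₀ :=
    (ContDiff.prodMk contDiff_id contDiff_const).contDiffAt
  have h1cd : ContDiffAt ℝ ((⊤:ℕ∞)) (fun y => ginv (y, 0)) x₀ :=
    hlocinv_cd.comp x₀ hpaircd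
  have hgcd : ContDiffAt ℝ ((⊤:ℕ∞)) g x₀ := contDiffAt_snd.comp x₀ h1cd
  -- right inverse eventually
  have hrinv : ∀ᶠ q in nhds (Φ p₀), Φ (ginv q) = q :=
    (hΦsm.hasStrictFDerivAt' hΦ'e one_le_inf).eventually_right_inverse
  rw [hΦp₀] at hrinv
  have hmap : Filter.Tendsto (fun y : Fin 4 → ℝ => (y, (0:ℝ))) (nhds x₀) (nhds (x₀, (0:ℝ))) := by
    have : ContinuousAt (fun y : Fin 4 → ℝ => (y, (0:ℝ))) x₀ := hpaircd.continuousAt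
    exact this
  have hrinv' : ∀ᶠ y in nhds x₀, Φ (ginv (y, 0)) = (y, 0) := hmap.eventually hrinv
  have hnull' : ∀ᶠ y in nhds x₀, mdot (y - z (g y)) (y - z (g y)) = 0 ∧ (ginv (y,0)).1 = y := by
    filter_upwards [hrinv'] with y hy
    have h1 : (ginv (y,0)).1 = y := congrArg Prod.fst hy
    have h2 : mdot ((ginv (y,0)).1 - z (g y)) ((ginv (y,0)).1 - z (g y)) = 0 :=
      congrArg Prod.snd hy
    rw [h1] at h2
    exact ⟨h2, h1⟩
  -- g x₀ = τ₀ and continuity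
  have hg0 : g x₀ = τ₀ := by
    have : ginv (Φ p₀) = p₀ := hΦsm.localInverse_apply_image hΦ'e one_le_inf
    rw [hΦp₀] at this
    simp [hg, this, hp₀]
  have hgc : ContinuousAt g x₀ := hgcd.continuousAt
  have hstrict : z τ₀ 0 < x₀ 0 := by
    have h0 : 0 ≤ χ₀ 0 := by
      have := (hu x₀).2
      simp [hχ₀, Pi.sub_apply]
      exact this
    have hpos : 0 < χ₀ 0 := by
      refine chi0_pos (v τ₀) χ₀ ?_ h0 ?_
      · exact (hu x₀).1
      · rw [← hr x₀] at *; exact hx₀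
    have := hpos
    simp [hχ₀, Pi.sub_apply] at this
    linarith
  have hcont2 : ContinuousAt (fun y : Fin 4 → ℝ => y 0 - z (g y) 0) x₀ := by
    apply ContinuousAt.sub
    · exact (continuous_apply 0).continuousAt
    · exact (continuous_apply 0).continuousAt.comp (hz.continuous.continuousAt.comp hgc)
  have hev2 : ∀ᶠ y in nhds x₀, 0 < y 0 - z (g y) 0 := by
    have hx : (0:ℝ) < x₀ 0 - z (g x₀) 0 := by rw [hg0]; linarith
    exact hcont2.eventually (eventually_gt_nhds hx)
  have hev_eq : ∀ᶠ y in nhds x₀, g y = u y := by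
    filter_upwards [hnull', hev2] with y hy hy2
    exact huniq y (g y) hy.1 (by linarith)
  exact hgcd.congr_of_eventuallyEq (hev_eq.mono fun y h => h.symm)

/-- The null vector field `k` is smooth on Ω = {x | r x > 0} and its gradient
is `k_{b,a} = (1/r)(η_{ab} + v_a k_b + k_a v_b − (1 + r a·k) k_a k_b)`. -/
theorem null_vector_smooth_gradient
    (z : ℝ → Fin 4 → ℝ) (hz : ContDiff ℝ (⊤ : ℕ∞) z)
    (v : ℝ → Fin 4 → ℝ) (hv : ∀ τ i, v τ i = deriv (fun t => z t i) τ)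
    (acc : ℝ → Fin 4 → ℝ) (hacc : ∀ τ i, acc τ i = deriv (fun t => v t i) τ)
    (hunit : ∀ τ, mdot (v τ) (v τ) = -1)
    (hfut : ∀ τ, 0 < v τ 0)
    (u : (Fin 4 → ℝ) → ℝ)
    (hu : ∀ x, mdot (x - z (u x)) (x - z (u x)) = 0 ∧ z (u x) 0 ≤ x 0)
    (huniq : ∀ x τ, mdot (x - z τ) (x - z τ) = 0 → z τ 0 ≤ x 0 → τ = u x)
    (r : (Fin 4 → ℝ) → ℝ)
    (hr : ∀ x, r x = -mdot (v (u x)) (x - z (u x)))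
    (k : (Fin 4 → ℝ) → Fin 4 → ℝ)
    (hk : ∀ x, k x = (r x)⁻¹ • (x - z (u x))) :
    ContDiffOn ℝ (⊤ : ℕ∞) k {x | 0 < r x} ∧
    ∀ x ∈ {x : Fin 4 → ℝ | 0 < r x}, ∀ a b : Fin 4,
      fderiv ℝ (fun y => lo (k y) b) x (Pi.single a 1) =
        (1 / r x) * (eta a b + lo (v (u x)) a * lo (k x) b
          + lo (k x) a * lo (v (u x)) b
          - (1 + r x * mdot (acc (u x)) (k x)) * lo (k x) a * lo (k x) b) := by
  have husm : ∀ x₀, 0 < r x₀ → ContDiffAt ℝ (⊤:ℕ∞) u x₀ :=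
    fun x₀ hx₀ => u_contDiffAt z hz v hv u hu huniq r hr x₀ hx₀
  have hvsm : ContDiff ℝ (⊤:ℕ∞) v := v_contDiff z hz v hv
  have hvD : ∀ τ, HasDerivAt v (acc τ) τ := fun τ => z_hasDerivAt v hvsm acc hacc τ
  have hzD : ∀ τ, HasDerivAt z (v τ) τ := z_hasDerivAt z hz v hv
  have hkc : ∀ x₀, 0 < r x₀ → ContDiffAt ℝ (⊤:ℕ∞) k x₀ := by
    intro x₀ hx₀
    have hus := husm x₀ hx₀
    have hchicd : ContDiffAt ℝ (⊤:ℕ∞) (fun y => y - z (u y)) x₀ :=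
      contDiffAt_id.sub ((hz.contDiffAt).comp x₀ hus)
    have hvucd : ContDiffAt ℝ (⊤:ℕ∞) (fun y => v (u y)) x₀ := (hvsm.contDiffAt).comp x₀ hus
    have hrcd : ContDiffAt ℝ (⊤:ℕ∞) r x₀ := by
      have hre : r = fun y => -mdot (v (u y)) (y - z (u y)) := funext hr
      rw [hre]
      exact (contDiffAt_mdot hvucd hchicd).neg
    have hke : k = fun y => (r y)⁻¹ • (y - z (u y)) := funext hk
    rw [hke]
    exact (hrcd.inv (ne_of_gt hx₀)).smul hchicd
  constructor
  · exact fun x hx => (hkc x hx).contDiffWithinAt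
  · intro x₀ hx₀ a b
    have hx₀' : 0 < r x₀ := hx₀
    have hne : r x₀ ≠ 0 := ne_of_gt hx₀'
    have hud : DifferentiableAt ℝ u x₀ := (husm x₀ hx₀').differentiableAt one_le_inf
    set U := fderiv ℝ u x₀ with hUdef
    have hu' : HasFDerivAt u U x₀ := hud.hasFDerivAt
    have hχk : x₀ - z (u x₀) = r x₀ • k x₀ := by
      rw [hk x₀, smul_smul, mul_inv_cancel₀ hne, one_smul]
    have hvχ : mdot (x₀ - z (u x₀)) (v (u x₀)) = -r x₀ := by
      rw [mdot_symm]
      have := hr x₀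
      linarith
    have hχw : ∀ w, mdot (x₀ - z (u x₀)) w = r x₀ * mdot (k x₀) w := by
      intro w; rw [hχk, mdot_smul_left]
    -- derivative of χ
    have hzc : HasFDerivAt (fun y => z (u y))
        (((1 : ℝ →L[ℝ] ℝ).smulRight (v (u x₀))).comp U) x₀ :=
      ((hzD (u x₀)).hasFDerivAt).comp x₀ hu'
    set Cχ : (Fin 4 → ℝ) →L[ℝ] (Fin 4 → ℝ) :=
      ContinuousLinearMap.id ℝ (Fin 4 → ℝ) - ((1 : ℝ →L[ℝ] ℝ).smulRight (v (u x₀))).comp U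
      with hCχdef
    have hχ' : HasFDerivAt (fun y => y - z (u y)) Cχ x₀ := (hasFDerivAt_id x₀).sub hzc
    have hCχw : ∀ w, Cχ w = w - (U w) • v (u x₀) := by
      intro w; simp [hCχdef]
    -- derivative of the null identity gives U
    set D0 : (Fin 4 → ℝ) →L[ℝ] ℝ := (2:ℝ) • ((mlin (x₀ - z (u x₀))).comp Cχ) with hD0def
    have hD0 : HasFDerivAt (fun y => mdot (y - z (u y)) (y - z (u y))) D0 x₀ := by
      refine hasFDerivAt_mdot hχ' hχ' ?_
      intro w
      have hsym : mdot (Cχ w) (x₀ - z (u x₀)) = mdot (x₀ - z (u x₀)) (Cχ w) := mdot_symm _ _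
      simp only [hD0def, ContinuousLinearMap.smul_apply, ContinuousLinearMap.comp_apply,
        mlin_apply, smul_eq_mul, hsym]
      ring
    have hzero : (fun y => mdot (y - z (u y)) (y - z (u y))) = fun _ => (0:ℝ) :=
      funext fun y => (hu y).1
    have hD0zero : D0 = 0 := by
      have h2 : HasFDerivAt (fun _ : Fin 4 → ℝ => (0:ℝ)) D0 x₀ := hzero ▸ hD0
      exact h2.unique (hasFDerivAt_const 0 x₀)
    have hUw : ∀ w, U w = -mdot (k x₀) w := by
      intro w
      have hD0w : D0 w = 0 := by rw [hD0zero]; simp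
      have h1 : D0 w = 2 * mdot (x₀ - z (u x₀)) (Cχ w) := by
        simp [hD0def]
      have h2 : mdot (x₀ - z (u x₀)) (Cχ w) = mdot (x₀ - z (u x₀)) w
          - U w * mdot (x₀ - z (u x₀)) (v (u x₀)) := by
        rw [hCχw w, mdot_sub_right, mdot_smul_right]
      rw [h1, h2, hχw w, hvχ] at hD0w
      have h3 : r x₀ * (mdot (k x₀) w + U w) = 0 := by linarith
      have h4 := (mul_eq_zero.mp h3).resolve_left hne
      linarith
    -- derivative of v ∘ u
    have hvuc : HasFDerivAt (fun y => v (u y))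
        (((1 : ℝ →L[ℝ] ℝ).smulRight (acc (u x₀))).comp U) x₀ :=
      ((hvD (u x₀)).hasFDerivAt).comp x₀ hu'
    set Cv : (Fin 4 → ℝ) →L[ℝ] (Fin 4 → ℝ) :=
      ((1 : ℝ →L[ℝ] ℝ).smulRight (acc (u x₀))).comp U with hCvdef
    have hCvw : ∀ w, Cv w = (U w) • acc (u x₀) := by intro w; simp [hCvdef]
    -- derivative of r
    set D1 : (Fin 4 → ℝ) →L[ℝ] ℝ :=
      (mlin (v (u x₀))).comp Cχ + (mlin (x₀ - z (u x₀))).comp Cv with hD1def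
    have hD1 : HasFDerivAt (fun y => mdot (v (u y)) (y - z (u y))) D1 x₀ := by
      refine hasFDerivAt_mdot hvuc hχ' ?_
      intro w
      have hsym : mdot (Cv w) (x₀ - z (u x₀)) = mdot (x₀ - z (u x₀)) (Cv w) := mdot_symm _ _
      simp only [hD1def, ContinuousLinearMap.add_apply, ContinuousLinearMap.comp_apply,
        mlin_apply, hsym]
    have hr' : HasFDerivAt r (-D1) x₀ := by
      have hre : r = fun y => -mdot (v (u y)) (y - z (u y)) := funext hr
      rw [hre]
      exact hD1.neg
    -- derivative of k
    have hinv : HasFDerivAt (fun y => (r y)⁻¹) ((-(r x₀ ^ 2)⁻¹ : ℝ) • (-D1)) x₀ :=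
      HasDerivAt.comp_hasFDerivAt x₀ (hasDerivAt_inv hne) hr'
    set Dk : (Fin 4 → ℝ) →L[ℝ] (Fin 4 → ℝ) :=
      (r x₀)⁻¹ • Cχ + ((-(r x₀ ^ 2)⁻¹ : ℝ) • (-D1)).smulRight (x₀ - z (u x₀)) with hDkdef
    have hk' : HasFDerivAt k Dk x₀ := by
      have hke : k = fun y => (r y)⁻¹ • (y - z (u y)) := funext hk
      rw [hke]
      exact hinv.smul hχ'
    -- derivative of lo (k y) b
    have hlok : (fun y => lo (k y) b) = fun y => mdot (Pi.single b 1) (k y) :=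
      funext fun y => (mdot_single_left _ _).symm
    have hDb : HasFDerivAt (fun y => mdot (Pi.single b 1) (k y))
        ((mlin (Pi.single b 1)).comp Dk) x₀ := by
      refine hasFDerivAt_mdot (hasFDerivAt_const (Pi.single b 1) x₀) hk' ?_
      intro w
      simp [mdot_zero_left]
    rw [hlok, hDb.fderiv]
    -- final evaluation
    have hUa : U (Pi.single a 1) = -lo (k x₀) a := by rw [hUw, mdot_single]
    have hCχa : Cχ (Pi.single a 1) = Pi.single a 1 + lo (k x₀) a • v (u x₀) := by
      rw [hCχw, hUa]
      simp [neg_smul, sub_neg_eq_add]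
    have hloCχ : lo (Cχ (Pi.single a 1)) b = eta a b + lo (k x₀) a * lo (v (u x₀)) b := by
      rw [hCχa, lo_add, lo_smul, lo_single]
    have hD1a : D1 (Pi.single a 1) = lo (v (u x₀)) a - lo (k x₀) a
        - lo (k x₀) a * (r x₀ * mdot (k x₀) (acc (u x₀))) := by
      have e1 : mdot (v (u x₀)) (Cχ (Pi.single a 1)) = lo (v (u x₀)) a - lo (k x₀) a := by
        rw [hCχa, mdot_add_right, mdot_smul_right, mdot_single, hunit]
        ring
      have e2 : mdot (x₀ - z (u x₀)) (Cv (Pi.single a 1))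
          = -lo (k x₀) a * (r x₀ * mdot (k x₀) (acc (u x₀))) := by
        rw [hCvw, hUa, mdot_smul_right, hχw]
      simp only [hD1def, ContinuousLinearMap.add_apply, ContinuousLinearMap.comp_apply,
        mlin_apply, e1, e2]
      ring
    have hloχ : lo (x₀ - z (u x₀)) b = r x₀ * lo (k x₀) b := by rw [hχk, lo_smul]
    have hDka : Dk (Pi.single a 1) = (r x₀)⁻¹ • (Cχ (Pi.single a 1))
        + ((r x₀ ^ 2)⁻¹ * D1 (Pi.single a 1)) • (x₀ - z (u x₀)) := by
      simp only [hDkdef, ContinuousLinearMap.add_apply, ContinuousLinearMap.smul_apply,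
        ContinuousLinearMap.smulRight_apply, ContinuousLinearMap.neg_apply, smul_eq_mul]
      congr 1
      rw [show (-(r x₀ ^ 2)⁻¹ : ℝ) * -D1 (Pi.single a 1) = (r x₀ ^ 2)⁻¹ * D1 (Pi.single a 1)
        by ring]
    have hsymak : mdot (k x₀) (acc (u x₀)) = mdot (acc (u x₀)) (k x₀) := mdot_symm _ _
    rw [ContinuousLinearMap.comp_apply, mlin_apply, mdot_single_left, hDka, lo_add, lo_smul,
      lo_smul, hloCχ, hloχ, hD1a, hsymak]
    field_simp
    ring
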